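/- Diagonalization of the discrete fractional Laplacian on the discrete torus. Let d, n ≥ 1 and α > 0. For every w ∈ Z_n^d, the character ψ_w(z) = exp(−2πi z·w/n) is an eigenfunction of the operator −(−Δ_n)^{α/2}, with eigenvalue λ_w^{(α,n)} = −2 c^{(α)} Σ_{z ∈ ℤ^d∖{0}} sin²(π z·w/n) / ‖z‖^{d+α}, where the series converges absolutely. -/

import Mathlib

/-- Euclidean norm of a point of `ℤ^d`. -/
noncomputable def zNorm (d : ℕ) (z : Fin d → ℤ) : ℝ :=
  Real.sqrt (∑ i : Fin d, ((z i : ℝ)) ^ 2)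

/-- The normalising constant `c^{(α)} = (Σ_{z ∈ ℤ^d∖{0}} ‖z‖^{-d-α})⁻¹`. -/
noncomputable def cAlpha (d : ℕ) (α : ℝ) : ℝ :=
  (∑' z : Fin d → ℤ, if z ≠ 0 then zNorm d z ^ (-(d : ℝ) - α) else 0)⁻¹

/-- The long-range transition kernel on the discrete torus:
`p_n^{(α)}(x) = c^{(α)} Σ_{z ∈ ℤ^d∖{0}, z ≡ x mod n} ‖z‖^{-d-α}`. -/
noncomputable def pLR (d n : ℕ) (α : ℝ) (x : Fin d → ZMod n) : ℝ :=
  cAlpha d α * ∑' z : Fin d → ℤ,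
    if z ≠ 0 ∧ (∀ i, ((z i : ZMod n)) = x i) then zNorm d z ^ (-(d : ℝ) - α) else 0

/-- The discrete fractional Laplacian `-(-Δ_n)^{α/2}` acting on complex-valued functions:
`f ↦ (Σ_y f(y) p_n^{(α)}(x - y)) - f(x)`. -/
noncomputable def fracLapC (d n : ℕ) [NeZero n] (α : ℝ) (f : (Fin d → ZMod n) → ℂ)
    (x : Fin d → ZMod n) : ℂ :=
  (∑ y : Fin d → ZMod n, f y * (pLR d n α (x - y) : ℂ)) - f x

/-- The character `ψ_w(z) = exp(-2πi z·w/n)` on the discrete torus, computed using the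
representatives `ZMod.val`. -/
noncomputable def torusChar (d n : ℕ) (w z : Fin d → ZMod n) : ℂ :=
  Complex.exp (-2 * (Real.pi : ℂ) * Complex.I *
    (∑ i : Fin d, ((z i).val : ℂ) * ((w i).val : ℂ)) / (n : ℂ))

open Complex Finset

/-! ### Auxiliary definitions -/

noncomputable def Ffun (d : ℕ) (α : ℝ) : (Fin d → ℤ) → ℝ :=
  fun z => if z ≠ 0 then zNorm d z ^ (-(d : ℝ) - α) else 0

noncomputable def Gfun (d n : ℕ) (α : ℝ) (u : Fin d → ZMod n) : (Fin d → ℤ) → ℝ :=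
  fun z => if z ≠ 0 ∧ (∀ i, ((z i : ZMod n)) = u i) then zNorm d z ^ (-(d : ℝ) - α) else 0

noncomputable def Sfun (d n : ℕ) (α : ℝ) (w : Fin d → ZMod n) : (Fin d → ℤ) → ℝ :=
  fun z => if z ≠ 0 then
      Real.sin (Real.pi * (∑ i : Fin d, (z i : ℝ) * ((w i).val : ℝ)) / n) ^ 2 *
        zNorm d z ^ (-(d : ℝ) - α)
    else 0

lemma cAlpha_eq (d : ℕ) (α : ℝ) : cAlpha d α = (∑' z, Ffun d α z)⁻¹ := rfl

lemma pLR_eq (d n : ℕ) (α : ℝ) (u : Fin d → ZMod n) :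
    pLR d n α u = cAlpha d α * ∑' z, Gfun d n α u z := rfl

/-! ### Summability of the base series -/

lemma abs_le_zNorm (d : ℕ) (z : Fin d → ℤ) (i : Fin d) : |(z i : ℝ)| ≤ zNorm d z := by
  rw [← Real.sqrt_sq_eq_abs]
  exact Real.sqrt_le_sqrt (Finset.single_le_sum (fun j _ => sq_nonneg ((z j : ℝ))) (mem_univ i))

lemma one_le_zNorm {d : ℕ} {z : Fin d → ℤ} (hz : z ≠ 0) : 1 ≤ zNorm d z := by
  obtain ⟨i, hi⟩ : ∃ i, z i ≠ 0 := by
    by_contra h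
    push_neg at h
    exact hz (funext h)
  refine le_trans ?_ (abs_le_zNorm d z i)
  have h1 : (1 : ℤ) ≤ |z i| := Int.one_le_abs (by simpa using hi)
  calc (1:ℝ) ≤ (|z i| : ℝ) := by exact_mod_cast h1
    _ = |(z i : ℝ)| := by simp

lemma zNorm_neg (d : ℕ) (z : Fin d → ℤ) : zNorm d (-z) = zNorm d z := by
  unfold zNorm
  congr 1
  refine Finset.sum_congr rfl fun i _ => ?_
  have : ((-z) i : ℝ) = -((z i : ℝ)) := by push_cast; simp
  rw [this, neg_sq]

lemma summable_g {β : ℝ} (hβ : 1 < β) :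
    Summable (fun m : ℤ => (max 1 |(m : ℝ)|) ^ (-β)) := by
  have h0 : Summable (fun m : ℤ => 1 / |(m : ℝ) + 1/2| ^ β) :=
    (Real.summable_one_div_int_add_rpow (1/2) β).mpr hβ
  refine (h0.mul_left ((3/2 : ℝ) ^ β)).of_nonneg_of_le (fun m => by positivity) (fun m => ?_)
  have hmax : (1 : ℝ) ≤ max 1 |(m : ℝ)| := le_max_left _ _
  have hne : (m : ℝ) + 1/2 ≠ 0 := by
    intro h
    have h2 : ((2 * m + 1 : ℤ) : ℝ) = 0 := by push_cast; linarith
    exact (by omega : (2 * m + 1 : ℤ) ≠ 0) (by exact_mod_cast h2)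
  have h1 : |(m : ℝ) + 1/2| ≤ (3/2) * max 1 |(m : ℝ)| := by
    have h4 := abs_add_le (m : ℝ) (1/2)
    have h2 : |(m : ℝ)| ≤ max 1 |(m : ℝ)| := le_max_right _ _
    have h3 : |(1/2 : ℝ)| = 1/2 := by norm_num
    nlinarith
  have hA : (0 : ℝ) < |(m : ℝ) + 1/2| ^ β := Real.rpow_pos_of_pos (abs_pos.2 hne) β
  have hB : (0 : ℝ) < (max 1 |(m : ℝ)|) ^ β :=
    Real.rpow_pos_of_pos (lt_of_lt_of_le one_pos hmax) β
  rw [Real.rpow_neg (by positivity), mul_one_div, inv_eq_one_div,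
    div_le_div_iff₀ hB hA, one_mul]
  calc |(m : ℝ) + 1/2| ^ β ≤ ((3/2) * max 1 |(m : ℝ)|) ^ β :=
        Real.rpow_le_rpow (abs_nonneg _) h1 (le_of_lt (lt_trans one_pos hβ))
    _ = (3/2 : ℝ) ^ β * (max 1 |(m : ℝ)|) ^ β :=
        Real.mul_rpow (by norm_num) (by positivity)

lemma summable_pi_prod {g : ℤ → ℝ} (hg : Summable g) (hg0 : ∀ m, 0 ≤ g m) (d : ℕ) :
    Summable (fun z : Fin d → ℤ => ∏ i, g (z i)) := by
  induction d with
  | zero =>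
      haveI : Finite (Fin 0 → ℤ) := Finite.of_subsingleton
      exact Summable.of_finite
  | succ d IH =>
      have key : Summable (fun p : ℤ × (Fin d → ℤ) => g p.1 * ∏ i, g (p.2 i)) := by
        apply Summable.mul_of_nonneg hg IH
        · exact Pi.le_def.mpr hg0
        · exact Pi.le_def.mpr fun z => Finset.prod_nonneg fun i _ => hg0 _
      have h2 := ((Fin.consEquiv (fun _ => ℤ)).symm.summable_iff
        (f := fun p : ℤ × (Fin d → ℤ) => g p.1 * ∏ i, g (p.2 i))).mpr key
      refine h2.congr fun z => ?_
      simp [Fin.consEquiv, Fin.prod_univ_succ, Fin.tail]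

lemma summable_F (d : ℕ) (hd : 1 ≤ d) (α : ℝ) (hα : 0 < α) :
    Summable (Ffun d α) := by
  have hd0 : (0 : ℝ) < d := by exact_mod_cast hd
  set β : ℝ := ((d : ℝ) + α) / d with hβdef
  have hβ : 1 < β := by
    rw [hβdef, lt_div_iff₀ hd0]
    linarith
  have hβ0 : 0 < β := lt_trans one_pos hβ
  have hg0 : ∀ m : ℤ, 0 ≤ (max 1 |(m : ℝ)|) ^ (-β) :=
    fun m => Real.rpow_nonneg (by positivity) _
  have hprod := summable_pi_prod (summable_g hβ) hg0 d
  refine hprod.of_nonneg_of_le (fun z => ?_) (fun z => ?_)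
  · unfold Ffun
    split
    · exact Real.rpow_nonneg (Real.sqrt_nonneg _) _
    · exact le_refl 0
  · unfold Ffun
    by_cases hz : z = 0
    · rw [if_neg (by simpa using hz)]
      exact Finset.prod_nonneg fun i _ => hg0 _
    · rw [if_pos hz]
      have hN1 : (1 : ℝ) ≤ zNorm d z := one_le_zNorm hz
      have hN0 : (0 : ℝ) < zNorm d z := lt_of_lt_of_le one_pos hN1
      have hprodle : (∏ i : Fin d, max 1 |(z i : ℝ)|) ≤ zNorm d z ^ (d : ℝ) := by
        rw [Real.rpow_natCast]
        calc (∏ i : Fin d, max 1 |(z i : ℝ)|) ≤ ∏ _i : Fin d, zNorm d z := by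
              apply Finset.prod_le_prod
              · intro i _; positivity
              · intro i _; exact max_le hN1 (abs_le_zNorm d z i)
          _ = zNorm d z ^ d := by simp
      have hexp : -(d : ℝ) - α = (d : ℝ) * (-β) := by
        rw [hβdef, mul_neg, mul_comm, div_mul_cancel₀ _ hd0.ne']; ring
      calc zNorm d z ^ (-(d : ℝ) - α)
          = (zNorm d z ^ (d : ℝ)) ^ (-β) := by
            rw [← Real.rpow_mul hN0.le, ← hexp]
        _ ≤ (∏ i : Fin d, max 1 |(z i : ℝ)|) ^ (-β) := by
            apply Real.rpow_le_rpow_of_nonpos _ hprodle (by linarith)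
            positivity
        _ = ∏ i : Fin d, (max 1 |(z i : ℝ)|) ^ (-β) :=
            (Real.finset_prod_rpow _ _ (fun i _ => by positivity) _).symm

/-! ### Character lemmas -/

lemma exp_sum_congr {d n : ℕ} [NeZero n] (a b c : Fin d → ℤ)
    (h : ∀ i, ((a i : ZMod n)) = (b i : ZMod n)) :
    Complex.exp (2 * (Real.pi : ℂ) * Complex.I * (∑ i, (a i : ℂ) * (c i : ℂ)) / n) =
      Complex.exp (2 * (Real.pi : ℂ) * Complex.I * (∑ i, (b i : ℂ) * (c i : ℂ)) / n) := by
  have hk : ∀ i, ∃ k : ℤ, a i - b i = n * k := by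
    intro i
    have h2 : (n : ℤ) ∣ a i - b i := by
      have := (ZMod.intCast_eq_intCast_iff' (a i) (b i) n).mp (h i)
      exact Int.ModEq.dvd (this.symm)
    obtain ⟨k, hk⟩ := h2
    exact ⟨k, hk⟩
  choose k hkk using hk
  have hn : (n : ℂ) ≠ 0 := Nat.cast_ne_zero.mpr (NeZero.ne n)
  rw [Complex.exp_eq_exp_iff_exists_int]
  refine ⟨∑ i, k i * c i, ?_⟩
  have key : (∑ i, (a i : ℂ) * (c i : ℂ)) =
      (∑ i, (b i : ℂ) * (c i : ℂ)) + (n : ℂ) * (∑ i, (k i : ℂ) * (c i : ℂ)) := by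
    rw [Finset.mul_sum, ← Finset.sum_add_distrib]
    refine Finset.sum_congr rfl fun i _ => ?_
    have h3 : (a i : ℂ) - (b i : ℂ) = (n : ℂ) * (k i : ℂ) := by
      exact_mod_cast congrArg (fun t : ℤ => (t : ℂ)) (hkk i)
    ring_nf
    linear_combination (c i : ℂ) * h3
  have hKc : ((∑ i, k i * c i : ℤ) : ℂ) = ∑ i, (k i : ℂ) * (c i : ℂ) := by push_cast; ring
  rw [key, hKc]
  field_simp

lemma torusChar_eq {d n : ℕ} [NeZero n] (w : Fin d → ZMod n) (m : Fin d → ℤ)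
    (z : Fin d → ZMod n) (h : ∀ i, ((m i : ZMod n)) = z i) :
    torusChar d n w z =
      (Complex.exp (2 * (Real.pi : ℂ) * Complex.I *
        (∑ i, (m i : ℂ) * ((((w i).val : ℤ)) : ℂ)) / n))⁻¹ := by
  have h1 : torusChar d n w z =
      Complex.exp (-(2 * (Real.pi : ℂ) * Complex.I *
        (∑ i, ((((z i).val : ℤ)) : ℂ) * ((((w i).val : ℤ)) : ℂ)) / n)) := by
    unfold torusChar
    congr 1
    push_cast
    ring
  rw [h1, Complex.exp_neg]
  congr 1
  apply exp_sum_congr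
  intro i
  have h2 : (((z i).val : ℤ) : ZMod n) = z i := by
    rw [Int.cast_natCast]
    exact ZMod.natCast_rightInverse (z i)
  rw [h2, h i]

lemma psi_sub {d n : ℕ} [NeZero n] (w x u : Fin d → ZMod n) :
    torusChar d n w (x - u) = torusChar d n w x *
      Complex.exp (2 * (Real.pi : ℂ) * Complex.I *
        (∑ i, ((((u i).val : ℤ)) : ℂ) * ((((w i).val : ℤ)) : ℂ)) / n) := by
  have hcast : ∀ v : Fin d → ZMod n, ∀ i, (((v i).val : ℤ) : ZMod n) = v i := by
    intro v i
    rw [Int.cast_natCast]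
    exact ZMod.natCast_rightInverse (v i)
  rw [torusChar_eq w (fun i => ((x i).val : ℤ) - ((u i).val : ℤ)) (x - u)
      (fun i => by push_cast [hcast x i, hcast u i]; rfl),
    torusChar_eq w (fun i => ((x i).val : ℤ)) x (fun i => hcast x i)]
  rw [← Complex.exp_neg, ← Complex.exp_neg, ← Complex.exp_add]
  congr 1
  push_cast
  simp only [sub_mul, Finset.sum_sub_distrib]
  ring

/-! ### The characters `E` and `χ` -/

noncomputable def Echar (d n : ℕ) (w : Fin d → ZMod n) (z : Fin d → ℤ) : ℂ :=
  Complex.exp (2 * (Real.pi : ℂ) * Complex.I *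
    (∑ i, (z i : ℂ) * (((w i).val : ℤ) : ℂ)) / n)

noncomputable def chiF (d n : ℕ) (w u : Fin d → ZMod n) : ℂ :=
  Complex.exp (2 * (Real.pi : ℂ) * Complex.I *
    (∑ i, (((u i).val : ℤ) : ℂ) * (((w i).val : ℤ) : ℂ)) / n)

noncomputable def Kfun (d n : ℕ) (α : ℝ) (w : Fin d → ZMod n) : (Fin d → ℤ) → ℂ :=
  fun z => if z ≠ 0 then
      (Echar d n w z - 1) * ((zNorm d z ^ (-(d : ℝ) - α) : ℝ) : ℂ)
    else 0

lemma psi_sub' {d n : ℕ} [NeZero n] (w x u : Fin d → ZMod n) :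
    torusChar d n w (x - u) = torusChar d n w x * chiF d n w u :=
  psi_sub w x u

lemma chi_cast {d n : ℕ} [NeZero n] (w : Fin d → ZMod n) (z : Fin d → ℤ) :
    chiF d n w (fun i => (z i : ZMod n)) = Echar d n w z := by
  unfold chiF Echar
  exact exp_sum_congr (fun i => (((z i : ZMod n)).val : ℤ)) z (fun i => ((w i).val : ℤ))
    (fun i => by rw [Int.cast_natCast]; exact ZMod.natCast_rightInverse _)

lemma Echar_abs {d n : ℕ} [NeZero n] (w : Fin d → ZMod n) (z : Fin d → ℤ) :
    ‖Echar d n w z‖ = 1 := by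
  unfold Echar
  rw [show 2 * (Real.pi : ℂ) * Complex.I *
      (∑ i, (z i : ℂ) * (((w i).val : ℤ) : ℂ)) / n
      = ((2 * Real.pi * (∑ i, (z i : ℝ) * ((w i).val : ℝ)) / n : ℝ) : ℂ) * Complex.I by
    push_cast; ring]
  exact Complex.norm_exp_ofReal_mul_I _

lemma summable_K {d n : ℕ} [NeZero n] {α : ℝ} (w : Fin d → ZMod n)
    (hF : Summable (Ffun d α)) : Summable (Kfun d n α w) := by
  apply Summable.of_norm_bounded (hF.mul_left 2)
  intro z
  unfold Kfun Ffun
  by_cases hz : z = 0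
  · simp [hz]
  · rw [if_pos hz, if_pos hz, norm_mul]
    have hA : (0:ℝ) ≤ zNorm d z ^ (-(d : ℝ) - α) :=
      Real.rpow_nonneg (Real.sqrt_nonneg _) _
    have h1 : ‖((zNorm d z ^ (-(d : ℝ) - α) : ℝ) : ℂ)‖ = zNorm d z ^ (-(d : ℝ) - α) := by
      rw [Complex.norm_real, Real.norm_eq_abs, _root_.abs_of_nonneg hA]
    have h2 : ‖Echar d n w z - 1‖ ≤ 2 := by
      calc ‖Echar d n w z - 1‖ ≤ ‖Echar d n w z‖ + ‖(1:ℂ)‖ := norm_sub_le _ _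
        _ = 2 := by
            rw [Echar_abs, norm_one]
            norm_num
    rw [h1]
    calc ‖Echar d n w z - 1‖ * (zNorm d z ^ (-(d : ℝ) - α))
        ≤ 2 * (zNorm d z ^ (-(d : ℝ) - α)) := by
          apply mul_le_mul_of_nonneg_right h2 hA
      _ = 2 * (zNorm d z ^ (-(d : ℝ) - α)) := rfl

lemma K_pair {d n : ℕ} [NeZero n] {α : ℝ} (w : Fin d → ZMod n) (z : Fin d → ℤ) :
    Kfun d n α w z + Kfun d n α w (-z) = ((-4 * Sfun d n α w z : ℝ) : ℂ) := by
  by_cases hz : z = 0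
  · subst hz
    simp [Kfun, Sfun]
  · have hnz : -z ≠ 0 := neg_ne_zero.mpr hz
    unfold Kfun Sfun
    rw [if_pos hz, if_pos hnz, if_pos hz, zNorm_neg]
    set s : ℝ := ∑ i, (z i : ℝ) * ((w i).val : ℝ) with hs
    rw [show Echar d n w z
        = Complex.exp (((2 * Real.pi * s / n : ℝ) : ℂ) * Complex.I) from by
      unfold Echar; congr 1; rw [hs]; push_cast; ring]
    rw [show Echar d n w (-z)
        = Complex.exp (((-(2 * Real.pi * s / n) : ℝ) : ℂ) * Complex.I) from by
      unfold Echar; congr 1; rw [hs]; simp only [Pi.neg_apply, Int.cast_neg, neg_mul, Finset.sum_neg_distrib]; push_cast; ring]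
    rw [Complex.exp_mul_I, Complex.exp_mul_I]
    set θ : ℝ := 2 * Real.pi * s / n with hθ
    have hsin : Real.sin (Real.pi * s / n) ^ 2 = (1 - Real.cos θ) / 2 := by
      have hhalf : θ = 2 * (Real.pi * s / n) := by rw [hθ]; ring
      have hc2 := Real.cos_two_mul (Real.pi * s / n)
      have hsc := Real.sin_sq_add_cos_sq (Real.pi * s / n)
      rw [hhalf, hc2]
      nlinarith [hsc]
    rw [← Complex.ofReal_cos, ← Complex.ofReal_sin, ← Complex.ofReal_cos,
      ← Complex.ofReal_sin, Real.cos_neg, Real.sin_neg, hsin]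
    push_cast
    ring

lemma tsum_K {d n : ℕ} [NeZero n] {α : ℝ} (w : Fin d → ZMod n)
    (hF : Summable (Ffun d α)) :
    ∑' z, Kfun d n α w z = ((-2 * ∑' z, Sfun d n α w z : ℝ) : ℂ) := by
  have hK := summable_K w hF
  have hKneg : Summable (fun z : Fin d → ℤ => Kfun d n α w (-z)) := by
    have h := ((Equiv.neg (Fin d → ℤ)).summable_iff (f := Kfun d n α w)).mpr hK
    refine h.congr fun z => ?_
    simp [Equiv.neg_apply]
  have h1 : ∑' z, Kfun d n α w (-z) = ∑' z, Kfun d n α w z := by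
    have h := (Equiv.neg (Fin d → ℤ)).tsum_eq (Kfun d n α w)
    simpa [Equiv.neg_apply] using h
  have h2 : (2:ℂ) * ∑' z, Kfun d n α w z = ∑' z, (Kfun d n α w z + Kfun d n α w (-z)) := by
    rw [Summable.tsum_add hK hKneg, h1]
    ring
  have h3 : ∑' z, (Kfun d n α w z + Kfun d n α w (-z))
      = ((-4:ℝ):ℂ) * ((∑' z, Sfun d n α w z : ℝ) : ℂ) := by
    rw [tsum_congr (fun z => K_pair w z)]
    calc ∑' z, ((-4 * Sfun d n α w z : ℝ) : ℂ)
        = ∑' z, ((-4:ℝ):ℂ) * ((Sfun d n α w z : ℝ) : ℂ) := by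
          refine tsum_congr fun z => ?_
          push_cast
          ring
      _ = ((-4:ℝ):ℂ) * ∑' z, ((Sfun d n α w z : ℝ) : ℂ) := tsum_mul_left
      _ = ((-4:ℝ):ℂ) * ((∑' z, Sfun d n α w z : ℝ) : ℂ) := by
          rw [Complex.ofReal_tsum]
  have h4 := h2.trans h3
  push_cast at h4 ⊢
  linear_combination h4 / 2

lemma innerSumChi {d n : ℕ} [NeZero n] {α : ℝ} (w : Fin d → ZMod n) (z : Fin d → ℤ) :
    (∑ u : Fin d → ZMod n, chiF d n w u * ((Gfun d n α u z : ℝ) : ℂ))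
      = Kfun d n α w z + ((Ffun d α z : ℝ) : ℂ) := by
  by_cases hz : z = 0
  · subst hz
    simp [Gfun, Kfun, Ffun]
  · have hG0 : ∀ u, Gfun d n α u z =
        if u = (fun i => ((z i : ZMod n))) then zNorm d z ^ (-(d : ℝ) - α) else 0 := by
      intro u
      unfold Gfun
      by_cases hu : u = (fun i => ((z i : ZMod n)))
      · rw [if_pos hu, if_pos ⟨hz, fun i => by rw [hu]⟩]
      · rw [if_neg, if_neg hu]
        rintro ⟨-, h2⟩
        exact hu (funext fun i => (h2 i).symm)
    have hsum : (∑ u : Fin d → ZMod n, chiF d n w u * ((Gfun d n α u z : ℝ) : ℂ))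
        = chiF d n w (fun i => ((z i : ZMod n))) * ((zNorm d z ^ (-(d : ℝ) - α) : ℝ) : ℂ) := by
      rw [Finset.sum_eq_single (fun i => ((z i : ZMod n)))]
      · rw [hG0, if_pos rfl]
      · intro u _ hu
        rw [hG0, if_neg hu]
        simp
      · intro h
        exact absurd (mem_univ _) h
    rw [hsum, chi_cast]
    unfold Kfun Ffun
    rw [if_pos hz, if_pos hz]
    ring

/-! ### Main theorem -/

/-- **Diagonalization of the discrete fractional Laplacian.** For every `w`,
the character `ψ_w` is an eigenfunction of `-(-Δ_n)^{α/2}` with eigenvalue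
`λ_w^{(α,n)} = -2 c^{(α)} Σ_{z ∈ ℤ^d∖{0}} sin²(π z·w/n) / ‖z‖^{d+α}`, where the series
converges absolutely. -/
theorem frac_laplacian_eigenfunction (d n : ℕ) (hd : 1 ≤ d) [NeZero n]
    (α : ℝ) (hα : 0 < α) (w : Fin d → ZMod n) :
    Summable (fun z : Fin d → ℤ =>
      if z ≠ 0 then
        Real.sin (Real.pi * (∑ i : Fin d, (z i : ℝ) * ((w i).val : ℝ)) / n) ^ 2 *
          zNorm d z ^ (-(d : ℝ) - α)
      else 0) ∧
    ∀ x : Fin d → ZMod n,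
      fracLapC d n α (torusChar d n w) x =
      ((-2 * cAlpha d α * ∑' z : Fin d → ℤ,
        if z ≠ 0 then
          Real.sin (Real.pi * (∑ i : Fin d, (z i : ℝ) * ((w i).val : ℝ)) / n) ^ 2 *
            zNorm d z ^ (-(d : ℝ) - α)
        else 0 : ℝ) : ℂ) * torusChar d n w x := by
  have hF : Summable (Ffun d α) := summable_F d hd α hα
  have hF0 : ∀ z, 0 ≤ Ffun d α z := by
    intro z
    unfold Ffun
    split
    · exact Real.rpow_nonneg (Real.sqrt_nonneg _) _
    · exact le_refl 0
  have hS : Summable (Sfun d n α w) := by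
    refine hF.of_nonneg_of_le (fun z => ?_) (fun z => ?_)
    · unfold Sfun
      split
      · exact mul_nonneg (sq_nonneg _) (Real.rpow_nonneg (Real.sqrt_nonneg _) _)
      · exact le_refl 0
    · unfold Sfun Ffun
      split
      · rename_i h
        have h1 : Real.sin (Real.pi * (∑ i : Fin d, (z i : ℝ) * ((w i).val : ℝ)) / n) ^ 2 ≤ 1 :=
          Real.sin_sq_le_one _
        have h2 : (0:ℝ) ≤ zNorm d z ^ (-(d : ℝ) - α) :=
          Real.rpow_nonneg (Real.sqrt_nonneg _) _
        nlinarith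
      · exact le_refl 0
  refine ⟨hS, fun x => ?_⟩
  have hK := summable_K w hF
  have hGsum : ∀ u : Fin d → ZMod n, Summable (Gfun d n α u) := by
    intro u
    refine hF.of_nonneg_of_le (fun z => ?_) (fun z => ?_)
    · unfold Gfun
      split
      · exact Real.rpow_nonneg (Real.sqrt_nonneg _) _
      · exact le_refl 0
    · unfold Gfun Ffun
      by_cases h : z ≠ 0 ∧ ∀ i, ((z i : ZMod n)) = u i
      · rw [if_pos h, if_pos h.1]
      · rw [if_neg h]
        split
        · exact Real.rpow_nonneg (Real.sqrt_nonneg _) _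
        · exact le_refl 0
  have hstep1 : (∑ y : Fin d → ZMod n, torusChar d n w y * (pLR d n α (x - y) : ℂ))
      = torusChar d n w x * ∑ u : Fin d → ZMod n, chiF d n w u * (pLR d n α u : ℂ) := by
    rw [← Equiv.sum_comp (Equiv.subLeft x)
      (fun y => torusChar d n w y * (pLR d n α (x - y) : ℂ)), Finset.mul_sum]
    refine Finset.sum_congr rfl fun u _ => ?_
    simp only [Equiv.subLeft_apply, sub_sub_cancel]
    rw [psi_sub' w x u]
    ring
  have hstep2 : ∀ u : Fin d → ZMod n, chiF d n w u * (pLR d n α u : ℂ)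
      = (cAlpha d α : ℂ) * ∑' z, chiF d n w u * ((Gfun d n α u z : ℝ) : ℂ) := by
    intro u
    rw [pLR_eq, Complex.ofReal_mul, Complex.ofReal_tsum, tsum_mul_left]
    ring
  have hstep3 : (∑ u : Fin d → ZMod n, chiF d n w u * (pLR d n α u : ℂ))
      = (cAlpha d α : ℂ) * ((∑' z, Kfun d n α w z) + ((∑' z, Ffun d α z : ℝ) : ℂ)) := by
    calc (∑ u : Fin d → ZMod n, chiF d n w u * (pLR d n α u : ℂ))
        = ∑ u : Fin d → ZMod n, (cAlpha d α : ℂ) * ∑' z, chiF d n w u * ((Gfun d n α u z : ℝ) : ℂ) :=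
          Finset.sum_congr rfl fun u _ => hstep2 u
      _ = (cAlpha d α : ℂ) * ∑ u : Fin d → ZMod n, ∑' z, chiF d n w u * ((Gfun d n α u z : ℝ) : ℂ) := by
          rw [Finset.mul_sum]
      _ = (cAlpha d α : ℂ) * ∑' z, ∑ u : Fin d → ZMod n, chiF d n w u * ((Gfun d n α u z : ℝ) : ℂ) := by
          rw [Summable.tsum_finsetSum (fun u _ => ((Complex.summable_ofReal.mpr (hGsum u)).mul_left (chiF d n w u)))]
      _ = (cAlpha d α : ℂ) * ∑' z, (Kfun d n α w z + ((Ffun d α z : ℝ) : ℂ)) := by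
          rw [tsum_congr (fun z => innerSumChi w z)]
      _ = (cAlpha d α : ℂ) * ((∑' z, Kfun d n α w z) + ∑' z, ((Ffun d α z : ℝ) : ℂ)) := by
          rw [Summable.tsum_add hK (Complex.summable_ofReal.mpr hF)]
      _ = (cAlpha d α : ℂ) * ((∑' z, Kfun d n α w z) + ((∑' z, Ffun d α z : ℝ) : ℂ)) := by
          rw [Complex.ofReal_tsum]
  have hposF : 0 < ∑' z, Ffun d α z := by
    have hz1 : (fun _ : Fin d => (1:ℤ)) ≠ 0 := by
      intro h
      exact one_ne_zero (congrFun h ⟨0, hd⟩)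
    refine Summable.tsum_pos hF hF0 (fun _ => 1) ?_
    have hNpos : 0 < zNorm d (fun _ => (1:ℤ)) := lt_of_lt_of_le one_pos (one_le_zNorm hz1)
    unfold Ffun
    rw [if_pos hz1]
    positivity
  have hc1 : (cAlpha d α : ℂ) * ((∑' z, Ffun d α z : ℝ) : ℂ) = 1 := by
    rw [← Complex.ofReal_mul, cAlpha_eq, inv_mul_cancel₀ hposF.ne', Complex.ofReal_one]
  have htK := tsum_K w hF
  show (∑ y : Fin d → ZMod n, torusChar d n w y * (pLR d n α (x - y) : ℂ)) - torusChar d n w x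
      = ((-2 * cAlpha d α * ∑' z, Sfun d n α w z : ℝ) : ℂ) * torusChar d n w x
  rw [hstep1, hstep3, htK]
  push_cast
  push_cast at hc1
  linear_combination (torusChar d n w x) * hc1
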